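/- As t → ∞, the Hardy-Littlewood function satisfies x(t) = 2^{1/2} π^{1/4} t^{-1/4} Z(2t) (1 + O(1/t)). -/

import Mathlib

open Complex Real Filter Topology

noncomputable def fHL (s : ℂ) : ℂ :=
  (Real.pi : ℂ) ^ (-s) * Complex.exp (-(1/2) * (s - 1/4) * Real.pi * Complex.I) *
    Complex.Gamma s * riemannZeta (2 * s)

noncomputable def xHL (t : ℝ) : ℂ := fHL (1/4 + t * Complex.I)

noncomputable def vartheta (t : ℝ) : ℝ :=
  -(t/2) * Real.log Real.pi + (Complex.log (Complex.Gamma (1/4 + Complex.I * t / 2))).im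

noncomputable def hardyZ (t : ℝ) : ℂ :=
  Complex.exp (Complex.I * vartheta t) * riemannZeta (1/2 + Complex.I * t)

/-! ### The exact identity -/

lemma xHL_eq (t : ℝ) :
    xHL t = ((Real.pi ^ (-(1:ℝ)/4) * Real.exp (Real.pi * t / 2) *
        norm (Complex.Gamma (1/4 + t * Complex.I)) : ℝ) : ℂ) * hardyZ (2 * t) := by
  have hπ : (0:ℝ) < Real.pi := Real.pi_pos
  set w : ℂ := 1/4 + t * Complex.I with hw_def
  have hwne : Complex.Gamma w ≠ 0 := by
    apply Complex.Gamma_ne_zero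
    intro m h
    have := congrArg Complex.re h
    simp [hw_def] at this
    norm_num at this
    nlinarith [Nat.cast_nonneg (α := ℝ) m, this]
  have harg : (1/4 + Complex.I * ((2*t : ℝ):ℂ) / 2 : ℂ) = w := by
    rw [hw_def]; push_cast; ring
  have hζ : (2 * (1/4 + t * Complex.I) : ℂ) = 1/2 + Complex.I * ((2*t:ℝ):ℂ) := by
    push_cast; ring
  have hcpow : (Real.pi : ℂ) ^ (-(1/4 + t * Complex.I) : ℂ)
      = Complex.exp (((Real.log Real.pi : ℝ):ℂ) * (-(1/4 + t * Complex.I))) := by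
    rw [Complex.cpow_def_of_ne_zero (by exact_mod_cast hπ.ne'), Complex.ofReal_log hπ.le]
  have hexpfac : Complex.exp (-(1/2) * ((1/4 + t * Complex.I) - 1/4) * Real.pi * Complex.I)
      = Complex.exp (((Real.pi * t / 2 : ℝ):ℂ)) := by
    congr 1
    push_cast
    ring_nf
    rw [Complex.I_sq]
    ring
  have hΓ : Complex.Gamma w
      = ((norm (Complex.Gamma w) : ℝ):ℂ)
        * Complex.exp ((((Complex.log (Complex.Gamma w)).im : ℝ):ℂ) * Complex.I) := by
    rw [Complex.log_im]
    exact (Complex.norm_mul_exp_arg_mul_I _).symm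
  have hrpow : (Real.pi ^ (-(1:ℝ)/4) : ℝ) = Real.exp (Real.log Real.pi * (-(1:ℝ)/4)) := by
    rw [Real.rpow_def_of_pos hπ]
  unfold xHL fHL hardyZ vartheta
  rw [harg, hζ, hcpow, hexpfac, hrpow]
  push_cast
  rw [← hw_def]
  set L := (Real.log Real.pi : ℂ) with hL
  set A := ((norm (Complex.Gamma w) : ℝ):ℂ) with hA
  set m := (((Complex.log (Complex.Gamma w)).im : ℝ):ℂ) with hm
  set Z := riemannZeta (1/2 + Complex.I * (2*(t:ℂ))) with hZ
  conv_lhs => rw [hΓ]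
  have key : Complex.exp (L * -w) * Complex.exp (m * Complex.I)
      = Complex.exp (L * (-1/4)) * Complex.exp (Complex.I * (-(2*(t:ℂ)/2) * L + m)) := by
    rw [← Complex.exp_add, ← Complex.exp_add]
    congr 1
    rw [hw_def]; ring
  linear_combination (Complex.exp ((Real.pi:ℂ) * t / 2) * A * Z) * key

/-! ### Duplication/reflection: exact product formula -/

lemma abs_Gamma_half_sq (t : ℝ) :
    (norm (Complex.Gamma (1/2 + (2*t) * Complex.I)))^2
      = Real.pi / Real.cosh (2 * Real.pi * t) := by
  set v : ℂ := 1/2 + (2*t) * Complex.I with hv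
  have hconj : (starRingEnd ℂ) v = 1 - v := by
    rw [hv]; simp [Complex.ext_iff]; ring
  have h1 := Complex.Gamma_mul_Gamma_one_sub v
  rw [← hconj, Complex.Gamma_conj, Complex.mul_conj] at h1
  have hsin : Complex.sin (Real.pi * v) = ((Real.cosh (2 * Real.pi * t) : ℝ) : ℂ) := by
    rw [hv]
    have : (Real.pi : ℂ) * (1/2 + (2*t) * Complex.I)
        = Real.pi/2 + ((2 * Real.pi * t : ℝ) : ℂ) * Complex.I := by push_cast; ring
    rw [this, Complex.sin_add, Complex.sin_pi_div_two, Complex.cos_pi_div_two,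
      Complex.cos_mul_I, Complex.ofReal_cosh]
    ring
  rw [hsin] at h1
  have hcosh : (0:ℝ) < Real.cosh (2 * Real.pi * t) := Real.cosh_pos _
  have : ((Complex.normSq (Complex.Gamma v) : ℝ) : ℂ)
      = ((Real.pi / Real.cosh (2 * Real.pi * t) : ℝ) : ℂ) := by
    rw [h1]; push_cast; ring
  have h2 : Complex.normSq (Complex.Gamma v) = Real.pi / Real.cosh (2 * Real.pi * t) :=
    Complex.ofReal_inj.mp this
  rw [← h2, Complex.sq_norm]

lemma abs_Gamma_quarter_prod (t : ℝ) :
    (norm (Complex.Gamma (1/4 + t * Complex.I)) *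
      norm (Complex.Gamma (3/4 + t * Complex.I)))^2
      = 2 * Real.pi ^ 2 / Real.cosh (2 * Real.pi * t) := by
  set z : ℂ := 1/4 + t * Complex.I with hz
  have hdup := Complex.Gamma_mul_Gamma_add_half z
  have hz2 : z + 1/2 = 3/4 + t * Complex.I := by rw [hz]; ring
  have h2z : 2 * z = 1/2 + (2*t) * Complex.I := by rw [hz]; push_cast; ring
  rw [hz2, h2z] at hdup
  have habs := congrArg norm hdup
  rw [norm_mul, norm_mul, norm_mul] at habs
  have hcpow : norm ((2:ℂ) ^ (1 - (1/2 + 2 * (t:ℂ) * Complex.I))) = Real.sqrt 2 := by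
    have h := Complex.norm_cpow_eq_rpow_re_of_pos (show (0:ℝ)<2 by norm_num)
      (1 - (1/2 + 2 * (t:ℂ) * Complex.I))
    rw [show ((2:ℝ):ℂ) = (2:ℂ) by norm_num] at h
    rw [h]
    have hre : (1 - (1/2 + 2 * (t:ℂ) * Complex.I)).re = 1/2 := by simp; norm_num
    rw [hre, ← Real.sqrt_eq_rpow]
  have hsqrtpi : norm ((Real.sqrt Real.pi : ℝ):ℂ) = Real.sqrt Real.pi := by
    rw [Complex.norm_real, Real.norm_eq_abs, _root_.abs_of_nonneg (Real.sqrt_nonneg _)]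
  rw [hcpow, hsqrtpi] at habs
  rw [habs]
  have h1 := abs_Gamma_half_sq t
  have hπ := Real.pi_pos
  rw [mul_pow, mul_pow, h1, Real.sq_sqrt (by norm_num : (0:ℝ) ≤ 2),
    Real.sq_sqrt hπ.le]
  field_simp

/-! ### The ratio estimate via GammaSeq products -/

private noncomputable def Df (t : ℝ) (j : ℕ) : ℝ := ((j:ℝ) + 1/4)^2 + t^2
private noncomputable def Mf (t : ℝ) (j : ℕ) : ℝ := ((j:ℝ) + 3/4)^2 + t^2
private noncomputable def cf (t : ℝ) (j : ℕ) : ℝ :=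
  Real.log (Mf t j) - (1/2)*Real.log (Df t j) - (1/2)*Real.log (Df t (j+1))
private noncomputable def gseq (t : ℝ) (n : ℕ) : ℝ :=
  (1/2)*Real.log t - (1/2)*Real.log n
    + (1/2)*∑ j ∈ Finset.range (n+1), (Real.log (Mf t j) - Real.log (Df t j))

section ratio
variable {t : ℝ} (ht : 2 ≤ t)

include ht

lemma Df_ge4 (j : ℕ) : 4 ≤ Df t j := by
  have hj : (0:ℝ) ≤ (j:ℝ) := Nat.cast_nonneg _
  unfold Df; nlinarith

lemma Df_pos (j : ℕ) : 0 < Df t j := lt_of_lt_of_le (by norm_num) (Df_ge4 ht j)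

lemma Mf_pos (j : ℕ) : 0 < Mf t j := by
  have hj : (0:ℝ) ≤ (j:ℝ) := Nat.cast_nonneg _
  have : (0:ℝ) < t := by linarith
  unfold Mf; positivity

lemma cf_abs_le (j : ℕ) : |cf t j| ≤ 1 / Df t j := by
  have hj : (0:ℝ) ≤ (j:ℝ) := Nat.cast_nonneg _
  set a : ℝ := (j:ℝ) + 1/4 with ha
  have hDpos : 0 < Df t j := Df_pos ht j
  have hDnpos : 0 < Df t (j+1) := Df_pos ht (j+1)
  have hMpos : 0 < Mf t j := Mf_pos ht j
  have hD4 : 4 ≤ Df t j := Df_ge4 ht j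
  have ha0 : 0 ≤ a := by rw [ha]; linarith
  have hM : Mf t j = Df t j + a + 1/4 := by unfold Mf Df; ring
  have hDn : Df t (j+1) = Df t j + 2*a + 1 := by unfold Df; push_cast; ring
  have hDle : Df t j ≤ Df t (j+1) := by rw [hDn]; nlinarith
  have ha14 : (a+1/4)^2 ≤ Df t (j+1) := by
    rw [hDn]; unfold Df; nlinarith
  set R : ℝ := Mf t j ^ 2 / (Df t j * Df t (j+1)) with hR
  have hRpos : 0 < R := by rw [hR]; positivity
  have e1 : (1 - 1/Df t j) * (Df t j * Df t (j+1))
      = Df t j * Df t (j+1) - Df t (j+1) := by field_simp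
  have e2 : (1 + 1/Df t j) * (Df t j * Df t (j+1))
      = Df t j * Df t (j+1) + Df t (j+1) := by field_simp
  have hnum : Mf t j ^2 = Df t j * Df t (j+1) + ((a+1/4)^2 - Df t j / 2) := by
    rw [hM, hDn]; ring
  have hRle : R ≤ 1 + 1/Df t j := by
    rw [hR, div_le_iff₀ (by positivity)]
    nlinarith
  have hRge : 1 - 1/Df t j ≤ R := by
    rw [hR, le_div_iff₀ (by positivity)]
    nlinarith
  have hDinv : 1/Df t j ≤ 1/4 := by
    rw [div_le_div_iff₀ hDpos (by norm_num)]; linarith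
  have hR34 : (3:ℝ)/4 ≤ R := by linarith
  have hcL : cf t j = (1/2) * Real.log R := by
    unfold cf
    rw [hR, Real.log_div (by positivity) (by positivity), Real.log_pow,
      Real.log_mul hDpos.ne' hDnpos.ne']
    push_cast; ring
  have hlog_ub : Real.log R ≤ 1/Df t j := by
    have := Real.log_le_sub_one_of_pos hRpos; linarith
  have hlog_lb : -(2/Df t j) ≤ Real.log R := by
    have h := Real.log_le_sub_one_of_pos (show (0:ℝ) < R⁻¹ by positivity)
    rw [Real.log_inv] at h
    have hinv : R⁻¹ - 1 ≤ 2/Df t j := by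
      rw [inv_eq_one_div, div_sub_one hRpos.ne', div_le_div_iff₀ hRpos hDpos]
      nlinarith
    linarith
  rw [hcL, abs_le]
  constructor
  · rw [div_eq_mul_inv 2] at hlog_lb
    have : -(1/Df t j) = (1/2) * (-(2 * (Df t j)⁻¹)) := by ring
    rw [this]
    apply mul_le_mul_of_nonneg_left _ (by norm_num : (0:ℝ) ≤ 1/2)
    linarith
  · have : (1:ℝ)/Df t j = (1/2) * (2 * (1/Df t j)) := by ring
    rw [this]
    apply mul_le_mul_of_nonneg_left _ (by norm_num : (0:ℝ) ≤ 1/2)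
    linarith

lemma tel_bound (j : ℕ) : 1 / Df t j ≤ 4 * (1/((j:ℝ)+t) - 1/((j:ℝ)+t+1)) := by
  have hj : (0:ℝ) ≤ (j:ℝ) := Nat.cast_nonneg _
  have hjj : (j:ℝ) ≤ (j:ℝ)^2 + 1/2 := by nlinarith [sq_nonneg ((j:ℝ) - 1)]
  have h1 : (0:ℝ) < (j:ℝ) + t := by linarith
  have h2 : (0:ℝ) < (j:ℝ) + t + 1 := by linarith
  have hDpos : 0 < Df t j := Df_pos ht j
  have e : 1/((j:ℝ)+t) - 1/((j:ℝ)+t+1) = 1/(((j:ℝ)+t)*((j:ℝ)+t+1)) := by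
    field_simp
    ring
  rw [e, show (4:ℝ) * (1 / (((j:ℝ)+t)*((j:ℝ)+t+1))) = 4 / (((j:ℝ)+t)*((j:ℝ)+t+1)) by ring,
    div_le_div_iff₀ hDpos (by positivity)]
  unfold Df
  nlinarith [sq_nonneg ((j:ℝ) - t)]

lemma cf_partial_sum_le (n : ℕ) : ∑ j ∈ Finset.range n, |cf t j| ≤ 4 / t := by
  have htpos : (0:ℝ) < t := by linarith
  calc ∑ j ∈ Finset.range n, |cf t j|
      ≤ ∑ j ∈ Finset.range n, 4 * (1/((j:ℝ)+t) - 1/((j:ℝ)+t+1)) := by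
        apply Finset.sum_le_sum
        intro j _
        exact (cf_abs_le ht j).trans (tel_bound ht j)
    _ = 4 * ∑ j ∈ Finset.range n, (1/((j:ℝ)+t) - 1/((j:ℝ)+t+1)) := by
        rw [Finset.mul_sum]
    _ = 4 * ∑ j ∈ Finset.range n, (1/((j:ℝ)+t) - 1/(((j+1:ℕ):ℝ)+t)) := by
        congr 1
        apply Finset.sum_congr rfl
        intro j _
        push_cast; ring
    _ = 4 * (1/(((0:ℕ):ℝ)+t) - 1/((n:ℝ)+t)) := by
        rw [Finset.sum_range_sub' (fun j : ℕ => 1/((j:ℝ)+t)) n]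
    _ ≤ 4 / t := by
        have : (0:ℝ) < (n:ℝ) + t := by positivity
        have h3 : 0 ≤ 1/((n:ℝ)+t) := by positivity
        push_cast
        rw [zero_add, div_eq_mul_inv 4 t, inv_eq_one_div]
        nlinarith

lemma cf_summable : Summable (fun j => |cf t j|) :=
  summable_of_sum_range_le (fun n => abs_nonneg _) (cf_partial_sum_le ht)

lemma cf_tsum_bound : |∑' j, cf t j| ≤ 4 / t := by
  have h1 : |∑' j, cf t j| ≤ ∑' j, |cf t j| := by
    simpa using norm_tsum_le_tsum_norm (f := cf t) (by simpa using cf_summable ht)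
  exact h1.trans (Real.tsum_le_of_sum_range_le (fun n => abs_nonneg _) (cf_partial_sum_le ht))

lemma gseq_identity (n : ℕ) :
    gseq t n = (1/2) * (∑ j ∈ Finset.range (n+1), cf t j)
      + ((1/2)*Real.log t - (1/4)*Real.log (Df t 0))
      + (1/4)*(Real.log (Df t (n+1)) - 2*Real.log n) := by
  have hsplit : ∀ j : ℕ, Real.log (Mf t j) - Real.log (Df t j)
      = cf t j + ((1/2)*Real.log (Df t (j+1)) - (1/2)*Real.log (Df t j)) := by
    intro j; unfold cf; ring
  unfold gseq
  rw [Finset.sum_congr rfl (fun j _ => hsplit j), Finset.sum_add_distrib,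
    Finset.sum_range_sub (fun j => (1/2)*Real.log (Df t j)) (n+1)]
  ring

lemma gseq_tendsto :
    Tendsto (gseq t) atTop
      (𝓝 ((1/2) * (∑' j, cf t j) + ((1/2)*Real.log t - (1/4)*Real.log (Df t 0)))) := by
  have htpos : (0:ℝ) < t := by linarith
  have hsum : Summable (cf t) := (cf_summable ht).of_abs
  have h5 : Tendsto (fun n => ∑ j ∈ Finset.range n, cf t j) atTop (𝓝 (∑' j, cf t j)) :=
    hsum.hasSum.tendsto_sum_nat
  have h6 : Tendsto (fun n => ∑ j ∈ Finset.range (n+1), cf t j) atTop (𝓝 (∑' j, cf t j)) :=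
    h5.comp (tendsto_add_atTop_nat 1)
  have hu : Tendsto (fun n:ℕ => 1/(n:ℝ)) atTop (𝓝 0) := tendsto_one_div_atTop_nhds_zero_nat
  have h1 : Tendsto (fun n:ℕ => (1 + (5/4)*(1/(n:ℝ)))^2 + t^2*(1/(n:ℝ))^2) atTop (𝓝 1) := by
    have ha : Tendsto (fun n:ℕ => 1 + (5/4)*(1/(n:ℝ))) atTop (𝓝 1) := by
      have := (hu.const_mul (5/4)).const_add 1
      simpa using this
    have hb := (ha.mul ha)
    have hc := (hu.mul hu).const_mul (t^2)
    have := hb.add hc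
    simp only [mul_one, mul_zero, add_zero] at this
    convert this using 2 <;> ring
  have h2 : Tendsto (fun n:ℕ => Df t (n+1) / (n:ℝ)^2) atTop (𝓝 1) := by
    apply h1.congr'
    filter_upwards [eventually_ge_atTop 1] with n hn
    have hnpos : (0:ℝ) < (n:ℝ) := by exact_mod_cast hn
    unfold Df
    field_simp
    push_cast
    ring
  have h3 : Tendsto (fun n:ℕ => Real.log (Df t (n+1) / (n:ℝ)^2)) atTop (𝓝 0) := by
    have := ((Real.continuousAt_log one_ne_zero).tendsto).comp h2
    rw [Real.log_one] at this
    exact this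
  have h4 : Tendsto (fun n:ℕ => Real.log (Df t (n+1)) - 2*Real.log n) atTop (𝓝 0) := by
    apply h3.congr'
    filter_upwards [eventually_ge_atTop 1] with n hn
    have hnpos : (0:ℝ) < (n:ℝ) := by exact_mod_cast hn
    have hD : 0 < Df t (n+1) := by unfold Df; positivity
    rw [Real.log_div hD.ne' (by positivity), Real.log_pow]
    push_cast; ring
  have htail := h4.const_mul (1/4:ℝ)
  have hmain := (h6.const_mul (1/2:ℝ)).add_const
    ((1/2)*Real.log t - (1/4)*Real.log (Df t 0))
  have hfull := hmain.add htail
  rw [mul_zero, add_zero] at hfull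
  apply hfull.congr
  intro n
  rw [gseq_identity ht n]

lemma ratio_est :
    ∃ G : ℝ, |G| ≤ 3/t ∧
      norm (Complex.Gamma (1/4 + t*Complex.I)) * Real.sqrt t
        = Real.exp G * norm (Complex.Gamma (3/4 + t*Complex.I)) := by
  have htpos : (0:ℝ) < t := by linarith
  set z : ℂ := 1/4 + t*Complex.I with hz
  have hz2 : z + 1/2 = 3/4 + t * Complex.I := by rw [hz]; ring
  set G : ℝ := (1/2) * (∑' j, cf t j) + ((1/2)*Real.log t - (1/4)*Real.log (Df t 0))
    with hG
  -- the sqrt helper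
  have hsq : ∀ x : ℝ, 0 < x → Real.exp ((1/2) * Real.log x) = Real.sqrt x := by
    intro x hx
    rw [Real.sqrt_eq_rpow, Real.rpow_def_of_pos hx, mul_comm]
  -- P = exp ∘ gseq
  have hPg : ∀ n : ℕ, 1 ≤ n →
      Real.sqrt t * (n:ℝ)^(-(1/2):ℝ) *
        ∏ j ∈ Finset.range (n+1), (Real.sqrt (Mf t j) / Real.sqrt (Df t j))
      = Real.exp (gseq t n) := by
    intro n hn
    have hnpos : (0:ℝ) < (n:ℝ) := by exact_mod_cast hn
    unfold gseq
    rw [show (1/2)*Real.log t - (1/2)*Real.log n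
        + (1/2)*∑ j ∈ Finset.range (n+1), (Real.log (Mf t j) - Real.log (Df t j))
      = (1/2)*Real.log t + (Real.log n * (-(1/2):ℝ))
        + ∑ j ∈ Finset.range (n+1),
            ((1/2)*Real.log (Mf t j) - (1/2)*Real.log (Df t j)) by
      rw [Finset.mul_sum]; congr 1; · ring
      · apply Finset.sum_congr rfl; intro j _; ring]
    rw [Real.exp_add, Real.exp_add, hsq t htpos, ← Real.rpow_def_of_pos hnpos,
      Real.exp_sum]
    congr 1
    apply Finset.prod_congr rfl
    intro j _
    rw [Real.exp_sub, hsq _ (Mf_pos ht j), hsq _ (Df_pos ht j)]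
  -- ratio identity
  have hP : ∀ n : ℕ, 1 ≤ n →
      norm (Complex.GammaSeq z n) /
        norm (Complex.GammaSeq (z + 1/2) n) * Real.sqrt t
      = Real.sqrt t * (n:ℝ)^(-(1/2):ℝ) *
          ∏ j ∈ Finset.range (n+1), (Real.sqrt (Mf t j) / Real.sqrt (Df t j)) := by
    intro n hn
    have hnpos : (0:ℝ) < (n:ℝ) := by exact_mod_cast hn
    have habsD : ∀ j : ℕ, norm (z + (j:ℂ)) = Real.sqrt (Df t j) := by
      intro j
      rw [Complex.norm_def]
      congr 1
      rw [Complex.normSq_apply]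
      simp [hz]
      unfold Df
      ring
    have habsM : ∀ j : ℕ, norm (z + 1/2 + (j:ℂ)) = Real.sqrt (Mf t j) := by
      intro j
      rw [Complex.norm_def]
      congr 1
      rw [Complex.normSq_apply]
      simp [hz]
      unfold Mf
      ring
    have hcp : ∀ (s : ℂ), norm ((n:ℂ) ^ s) = (n:ℝ) ^ s.re := by
      intro s
      rw [show ((n:ℂ)) = (((n:ℝ)):ℂ) by push_cast; rfl,
        Complex.norm_cpow_eq_rpow_re_of_pos hnpos]
    have hre1 : z.re = 1/4 := by simp [hz]
    have hre2 : (z + 1/2).re = 3/4 := by simp [hz]; norm_num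
    rw [Complex.GammaSeq, Complex.GammaSeq]
    rw [norm_div, norm_div, norm_mul, norm_mul, norm_prod, norm_prod]
    rw [hcp z, hcp (z + 1/2), hre1, hre2]
    simp only [habsD, habsM, Complex.norm_natCast]
    have hprodD : 0 < ∏ j ∈ Finset.range (n+1), Real.sqrt (Df t j) := by
      apply Finset.prod_pos
      intro j _
      exact Real.sqrt_pos.mpr (Df_pos ht j)
    have hprodM : 0 < ∏ j ∈ Finset.range (n+1), Real.sqrt (Mf t j) := by
      apply Finset.prod_pos
      intro j _
      exact Real.sqrt_pos.mpr (Mf_pos ht j)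
    have hfac : (0:ℝ) < (n.factorial : ℝ) := by exact_mod_cast n.factorial_pos
    have hr1 : (0:ℝ) < (n:ℝ) ^ ((1:ℝ)/4) := Real.rpow_pos_of_pos hnpos _
    have hr3 : (0:ℝ) < (n:ℝ) ^ ((3:ℝ)/4) := Real.rpow_pos_of_pos hnpos _
    rw [Finset.prod_div_distrib]
    rw [show (-(1/2):ℝ) = (1:ℝ)/4 - 3/4 by norm_num, Real.rpow_sub hnpos]
    field_simp
  -- limits
  have hGne : Complex.Gamma (z + 1/2) ≠ 0 := by
    apply Complex.Gamma_ne_zero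
    intro m h
    rw [hz2] at h
    have := congrArg Complex.re h
    simp at this
    norm_num at this
    nlinarith [Nat.cast_nonneg (α := ℝ) m, this]
  have hBne : norm (Complex.Gamma (z + 1/2)) ≠ 0 := by
    simpa using hGne
  have hTendA : Tendsto (fun n => norm (Complex.GammaSeq z n)) atTop
      (𝓝 (norm (Complex.Gamma z))) :=
    (continuous_norm.tendsto _).comp (Complex.GammaSeq_tendsto_Gamma z)
  have hTendB : Tendsto (fun n => norm (Complex.GammaSeq (z + 1/2) n)) atTop
      (𝓝 (norm (Complex.Gamma (z + 1/2)))) :=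
    (continuous_norm.tendsto _).comp (Complex.GammaSeq_tendsto_Gamma (z + 1/2))
  have hTendRatio : Tendsto (fun n => norm (Complex.GammaSeq z n) /
      norm (Complex.GammaSeq (z + 1/2) n) * Real.sqrt t) atTop
      (𝓝 (norm (Complex.Gamma z) / norm (Complex.Gamma (z + 1/2))
        * Real.sqrt t)) :=
    (hTendA.div hTendB hBne).mul_const _
  have hTendExp : Tendsto (fun n => Real.exp (gseq t n)) atTop (𝓝 (Real.exp G)) := by
    rw [hG]
    exact (Real.continuous_exp.tendsto _).comp (gseq_tendsto ht)
  have hTendRatio' : Tendsto (fun n => norm (Complex.GammaSeq z n) /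
      norm (Complex.GammaSeq (z + 1/2) n) * Real.sqrt t) atTop
      (𝓝 (Real.exp G)) := by
    apply hTendExp.congr'
    filter_upwards [eventually_ge_atTop 1] with n hn
    rw [← hPg n hn, ← hP n hn]
  have hLG : norm (Complex.Gamma z) / norm (Complex.Gamma (z + 1/2))
      * Real.sqrt t = Real.exp G :=
    tendsto_nhds_unique hTendRatio hTendRatio'
  -- bound |G|
  have hGbound : |G| ≤ 3/t := by
    have h1 : |(1/2) * (∑' j, cf t j)| ≤ 2/t := by
      rw [abs_mul]
      have := cf_tsum_bound ht
      rw [show |(1:ℝ)/2| = 1/2 by norm_num]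
      calc (1/2) * |∑' j, cf t j| ≤ (1/2) * (4/t) := by linarith
        _ = 2/t := by ring
    have hD0 : Df t 0 = 1/16 + t^2 := by unfold Df; norm_num
    have hD0pos : (0:ℝ) < Df t 0 := Df_pos ht 0
    have h2 : (1/2)*Real.log t - (1/4)*Real.log (Df t 0)
        = -((1/4) * Real.log (Df t 0 / t^2)) := by
      rw [Real.log_div hD0pos.ne' (by positivity), Real.log_pow]
      push_cast; ring
    have hq1 : 1 ≤ Df t 0 / t^2 := by
      rw [le_div_iff₀ (by positivity), hD0]; nlinarith
    have hlogq : 0 ≤ Real.log (Df t 0 / t^2) := Real.log_nonneg hq1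
    have hlogq2 : Real.log (Df t 0 / t^2) ≤ 1/(16*t^2) := by
      have := Real.log_le_sub_one_of_pos (show (0:ℝ) < Df t 0 / t^2 by positivity)
      have he : Df t 0 / t^2 - 1 = (1/16)/t^2 := by
        rw [hD0]; field_simp; ring
      rw [he] at this
      calc Real.log (Df t 0 / t^2) ≤ (1/16)/t^2 := this
        _ = 1/(16*t^2) := by ring
    have h3 : |(1/2)*Real.log t - (1/4)*Real.log (Df t 0)| ≤ 1/t := by
      rw [h2, abs_neg, abs_mul, show |(1:ℝ)/4| = 1/4 by norm_num,
        _root_.abs_of_nonneg hlogq]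
      have h4t : 1/(16*t^2) ≤ 4/t := by
        rw [div_le_div_iff₀ (by positivity) htpos]
        nlinarith
      calc (1/4) * Real.log (Df t 0 / t^2) ≤ (1/4) * (1/(16*t^2)) := by linarith
        _ ≤ (1/4) * (4/t) := by linarith
        _ = 1/t := by ring
    calc |G| ≤ |(1/2) * (∑' j, cf t j)|
        + |(1/2)*Real.log t - (1/4)*Real.log (Df t 0)| := abs_add_le _ _
      _ ≤ 2/t + 1/t := add_le_add h1 h3
      _ = 3/t := by ring
  refine ⟨G, hGbound, ?_⟩
  rw [div_mul_eq_mul_div, div_eq_iff hBne] at hLG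
  rw [← hz2, ← hLG]

end ratio

/-! ### Final assembly -/

set_option maxHeartbeats 1000000

lemma Kbound {t N N' G : ℝ} (htt : 3 ≤ t) (hNpos : 0 < N) (hN'pos : 0 < N')
    (hGb : |G| ≤ 3/t) (hGe : N * Real.sqrt t = Real.exp G * N')
    (hNN : (N*N')^2 = 2*Real.pi^2/Real.cosh (2*Real.pi*t)) :
    |N * t^((1:ℝ)/4) * Real.exp (Real.pi*t/2) / Real.sqrt (2*Real.pi) - 1| ≤ 9/t := by
  have htpos : (0:ℝ) < t := by linarith
  have hπ : (0:ℝ) < Real.pi := Real.pi_pos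
  set K : ℝ := N * t^((1:ℝ)/4) * Real.exp (Real.pi*t/2) / Real.sqrt (2*Real.pi) with hK
  set u : ℝ := Real.exp (-(4*Real.pi*t)) with hu
  have hu_pos : 0 < u := Real.exp_pos _
  have hu_le : u ≤ 1/t := by
    have h1 : u ≤ Real.exp (-t) := by
      apply Real.exp_le_exp.mpr
      nlinarith [Real.pi_gt_three]
    have h2 : Real.exp (-t) ≤ 1/t := by
      rw [Real.exp_neg, inv_eq_one_div, div_le_div_iff₀ (Real.exp_pos t) htpos]
      nlinarith [Real.add_one_le_exp t]
    linarith
  have hu1 : u ≤ 1/3 := by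
    have : (1:ℝ)/t ≤ 1/3 := by
      rw [div_le_div_iff₀ htpos (by norm_num)]; linarith
    linarith
  have hEu : Real.exp (2*Real.pi*t) * u = Real.exp (-(2*Real.pi*t)) := by
    rw [hu, ← Real.exp_add]; ring_nf
  clear_value K u
  have hNN'' : N*N' = Real.sqrt (2*Real.pi^2/Real.cosh (2*Real.pi*t)) := by
    rw [← hNN, Real.sqrt_sq (by positivity)]
  have hcosh_pos : (0:ℝ) < Real.cosh (2*Real.pi*t) := Real.cosh_pos _
  have hE2 : (Real.exp (Real.pi*t))^2 = Real.exp (2*Real.pi*t) := by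
    rw [← Real.exp_nat_mul]; ring_nf
  have hsqrt_id : Real.sqrt (2*Real.pi^2/Real.cosh (2*Real.pi*t)) * Real.exp (Real.pi*t)
      = Real.sqrt (4*Real.pi^2/(1+u)) := by
    rw [show Real.exp (Real.pi*t) = Real.sqrt ((Real.exp (Real.pi*t))^2) from
      (Real.sqrt_sq (Real.exp_pos _).le).symm, ← Real.sqrt_mul (by positivity)]
    congr 1
    rw [hE2, Real.cosh_eq]
    have h1u : (0:ℝ) < 1 + u := by linarith
    field_simp
    linear_combination 4 * hEu
  have hq14 : (t^((1:ℝ)/4))^2 = Real.sqrt t := by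
    rw [← Real.rpow_natCast (t^((1:ℝ)/4)) 2, ← Real.rpow_mul htpos.le, Real.sqrt_eq_rpow]
    norm_num
  have hehalf : (Real.exp (Real.pi*t/2))^2 = Real.exp (Real.pi*t) := by
    rw [← Real.exp_nat_mul]; ring_nf
  have hK2 : K^2 = Real.exp G * Real.sqrt (4*Real.pi^2/(1+u)) / (2*Real.pi) := by
    rw [hK, div_pow, mul_pow, mul_pow, Real.sq_sqrt (by positivity), hq14, hehalf]
    rw [show N^2 * Real.sqrt t = N * (N * Real.sqrt t) by ring, hGe]
    rw [show N * (Real.exp G * N') * Real.exp (Real.pi*t)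
      = Real.exp G * (N * N' * Real.exp (Real.pi*t)) by ring, hNN'', hsqrt_id]
  have hsqrt_ub : Real.sqrt (4*Real.pi^2/(1+u)) ≤ 2*Real.pi := by
    have h1 : 4*Real.pi^2/(1+u) ≤ 4*Real.pi^2 :=
      div_le_self (by positivity) (by linarith)
    calc Real.sqrt (4*Real.pi^2/(1+u)) ≤ Real.sqrt (4*Real.pi^2) := Real.sqrt_le_sqrt h1
      _ = 2*Real.pi := by
          rw [show 4*Real.pi^2 = (2*Real.pi)^2 by ring, Real.sqrt_sq (by positivity)]
  have hsqrt_lb : 2*Real.pi*(1-u) ≤ Real.sqrt (4*Real.pi^2/(1+u)) := by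
    have h1u : (0:ℝ) < 1 + u := by linarith
    have hlt : (0:ℝ) < 2*Real.pi*(1-u) :=
      mul_pos (by positivity) (by linarith : (0:ℝ) < 1 - u)
    apply (Real.le_sqrt' hlt).mpr
    rw [le_div_iff₀ h1u]
    have hcube : u*u*u ≤ u*u := by nlinarith [hu_pos, hu1]
    have hpoly : (1-u)^2*(1+u) ≤ 1 := by nlinarith [hcube, hu_pos]
    calc (2*Real.pi*(1-u))^2*(1+u) = 4*Real.pi^2*((1-u)^2*(1+u)) := by ring
      _ ≤ 4*Real.pi^2*1 := mul_le_mul_of_nonneg_left hpoly (by positivity)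
      _ = 4*Real.pi^2 := by ring
  have hGlo : -(3/t) ≤ G := by have := abs_le.mp hGb; linarith [this.1]
  have hGhi : G ≤ 3/t := (abs_le.mp hGb).2
  have hexpG_ub : Real.exp G ≤ Real.exp (3/t) := Real.exp_le_exp.mpr hGhi
  have hexpG_lb : Real.exp (-(3/t)) ≤ Real.exp G := Real.exp_le_exp.mpr hGlo
  have h2πpos : (0:ℝ) < 2*Real.pi := by positivity
  have hK2ub : K^2 ≤ Real.exp (3/t) := by
    rw [hK2, div_le_iff₀ h2πpos]
    exact mul_le_mul hexpG_ub hsqrt_ub (Real.sqrt_nonneg _) (Real.exp_pos _).le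
  have hK2lb : (1 - 3/t)*(1-u) ≤ K^2 := by
    rw [hK2, le_div_iff₀ h2πpos]
    have h1 : 1 - 3/t ≤ Real.exp (-(3/t)) := by
      have := Real.add_one_le_exp (-(3/t)); linarith
    have h13t : (0:ℝ) ≤ 1 - 3/t := by
      have : (3:ℝ)/t ≤ 1 := by rw [div_le_one htpos]; linarith
      linarith
    have hstep : (1 - 3/t) * (2*Real.pi*(1-u))
        ≤ Real.exp G * Real.sqrt (4*Real.pi^2/(1+u)) :=
      mul_le_mul (h1.trans hexpG_lb) hsqrt_lb (by nlinarith) (Real.exp_pos _).le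
    nlinarith
  have hexp3t : Real.exp (3/t) ≤ 3 := by
    have h1 : (3:ℝ)/t ≤ 1 := by rw [div_le_one htpos]; linarith
    calc Real.exp (3/t) ≤ Real.exp 1 := Real.exp_le_exp.mpr h1
      _ ≤ 3 := by have := Real.exp_one_lt_d9; linarith
  have hup : K^2 - 1 ≤ 9/t := by
    have hmul : Real.exp (-(3/t)) * Real.exp (3/t) = 1 := by
      rw [← Real.exp_add]; simp
    have hx : Real.exp (3/t) - 1 ≤ (3/t) * Real.exp (3/t) := by
      nlinarith [Real.add_one_le_exp (-(3/t)), Real.exp_pos (3/t)]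
    have h3t : (0:ℝ) < 3/t := by positivity
    have hy : (3/t) * Real.exp (3/t) ≤ (3/t) * 3 := by nlinarith
    have h93 : (3/t) * 3 = 9/t := by ring
    linarith [hK2ub]
  have hlow : 1 - K^2 ≤ 9/t := by
    have h1 : 1 - 3/t - u ≤ (1 - 3/t)*(1-u) := by
      nlinarith [mul_nonneg hu_pos.le (by positivity : (0:ℝ) ≤ 3/t)]
    have h2 : 1 - K^2 ≤ 3/t + u := by linarith [hK2lb]
    have h3 : (3:ℝ)/t + 1/t ≤ 9/t := by
      rw [← add_div]
      gcongr
      norm_num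
    linarith [hu_le]
  have hKpos : 0 < K := by
    rw [hK]
    have h0 : (0:ℝ) < t^((1:ℝ)/4) := Real.rpow_pos_of_pos htpos _
    exact div_pos (mul_pos (mul_pos hNpos h0) (Real.exp_pos _))
      (Real.sqrt_pos.mpr h2πpos)
  have hfac : K^2 - 1 = (K-1)*(K+1) := by ring
  have habs2 : |K^2 - 1| = |K - 1| * (K+1) := by
    rw [hfac, abs_mul, _root_.abs_of_pos (by linarith : (0:ℝ) < K+1)]
  have h2 : |K^2 - 1| ≤ 9/t := abs_le.mpr ⟨by linarith, by linarith⟩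
  nlinarith [abs_nonneg (K-1), abs_nonneg (K^2-1)]

theorem stmt_3 :
    ∃ C t₀ : ℝ, 0 < C ∧ 0 < t₀ ∧ ∀ t : ℝ, t₀ ≤ t →
      ∃ E : ℂ, ‖E‖ ≤ C / t ∧
        xHL t = (((2:ℝ) ^ ((1:ℝ)/2) * Real.pi ^ ((1:ℝ)/4) * t ^ (-(1:ℝ)/4) : ℝ) : ℂ) *
          hardyZ (2 * t) * (1 + E) := by
  refine ⟨9, 3, by norm_num, by norm_num, ?_⟩
  intro t htt
  have ht : 2 ≤ t := by linarith
  have htpos : (0:ℝ) < t := by linarith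
  have hπ : (0:ℝ) < Real.pi := Real.pi_pos
  obtain ⟨G, hGb, hGe⟩ := ratio_est ht
  set N : ℝ := norm (Complex.Gamma (1/4 + t*Complex.I)) with hNdef
  set N' : ℝ := norm (Complex.Gamma (3/4 + t*Complex.I)) with hN'def
  have hNpos : 0 < N := by
    rw [hNdef]
    apply norm_pos_iff.mpr
    apply Complex.Gamma_ne_zero
    intro m h
    have := congrArg Complex.re h
    simp at this
    norm_num at this
    nlinarith [Nat.cast_nonneg (α := ℝ) m, this]
  have hN'pos : 0 < N' := by
    rw [hN'def]
    apply norm_pos_iff.mpr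
    apply Complex.Gamma_ne_zero
    intro m h
    have := congrArg Complex.re h
    simp at this
    norm_num at this
    nlinarith [Nat.cast_nonneg (α := ℝ) m, this]
  have hNN : (N*N')^2 = 2*Real.pi^2/Real.cosh (2*Real.pi*t) := abs_Gamma_quarter_prod t
  clear_value N N'
  set K : ℝ := N * t^((1:ℝ)/4) * Real.exp (Real.pi*t/2) / Real.sqrt (2*Real.pi) with hK
  have hK1 : |K - 1| ≤ 9/t := Kbound htt hNpos hN'pos hGb hGe hNN
  have hKpos : 0 < K := by
    rw [hK]
    have h0 : (0:ℝ) < t^((1:ℝ)/4) := Real.rpow_pos_of_pos htpos _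
    exact div_pos (mul_pos (mul_pos hNpos h0) (Real.exp_pos _))
      (Real.sqrt_pos.mpr (by positivity))
  clear_value K
  have hcoef : (2:ℝ)^((1:ℝ)/2) * Real.pi^((1:ℝ)/4) * t^(-(1:ℝ)/4) * K
      = Real.pi ^ (-((1:ℝ))/4) * Real.exp (Real.pi*t/2) * N := by
    rw [hK]
    have e1 : t^(-(1:ℝ)/4) * t^((1:ℝ)/4) = 1 := by
      rw [← Real.rpow_add htpos]; norm_num
    have e2 : Real.sqrt (2*Real.pi) = (2:ℝ)^((1:ℝ)/2) * Real.pi^((1:ℝ)/2) := by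
      rw [Real.sqrt_mul (by norm_num), Real.sqrt_eq_rpow, Real.sqrt_eq_rpow]
    have e3 : Real.pi^(-((1:ℝ))/4) * Real.pi^((1:ℝ)/2) = Real.pi^((1:ℝ)/4) := by
      rw [← Real.rpow_add hπ]; norm_num
    have hw2 : (0:ℝ) < (2:ℝ)^((1:ℝ)/2) := Real.rpow_pos_of_pos (by norm_num) _
    have hwπ : (0:ℝ) < Real.pi^((1:ℝ)/2) := Real.rpow_pos_of_pos hπ _
    rw [e2]
    field_simp
    rw [neg_div] at e1 e3
    linear_combination Real.pi^((1:ℝ)/4) * e1 - e3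
  refine ⟨((K - 1 : ℝ) : ℂ), ?_, ?_⟩
  · rw [Complex.norm_real, Real.norm_eq_abs]
    exact hK1
  · rw [xHL_eq t, ← hNdef]
    have h1p : (1:ℂ) + ((K - 1 : ℝ):ℂ) = ((K:ℝ):ℂ) := by push_cast; ring
    rw [h1p, ← hcoef]
    push_cast
    ring
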